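/- Define s(x) = 1 + |x| − x₁ for x ∈ ℝ³. Then there exists C > 0 such that for all x ∈ ℝ³: ∫_{ℝ³} [(1+|x−y|) s(x−y)]^{−2} [(1+|y|) s(y)]^{−2} dy ≤ C [(1+|x|) s(x)]^{−2} ln(2+|x|). -/

import Mathlib

open MeasureTheory

noncomputable def sOne (x : EuclideanSpace ℝ (Fin 3)) : ℝ := 1 + ‖x‖ - x 0

namespace ConvAux

open Set ENNReal

abbrev E3 := EuclideanSpace ℝ (Fin 3)

/-- comparable anisotropic weight -/
noncomputable def V (y : E3) : ℝ :=
  1 + |y 0| + (y 1)^2 + (y 2)^2 + (max (-(y 0)) 0)^2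

noncomputable def W (y : E3) : ℝ := (1 + ‖y‖) * sOne y

lemma norm_sq (y : E3) : ‖y‖^2 = (y 0)^2 + (y 1)^2 + (y 2)^2 := by
  rw [EuclideanSpace.norm_eq, Real.sq_sqrt (by positivity)]
  simp [Fin.sum_univ_three, sq_abs]

lemma abs_coord_le (y : E3) (i : Fin 3) : |y i| ≤ ‖y‖ := by
  refine abs_le_of_sq_le_sq ?_ (norm_nonneg y)
  rw [norm_sq y]
  fin_cases i <;> simp <;>
    nlinarith [sq_nonneg (y 0), sq_nonneg (y 1), sq_nonneg (y 2)]

lemma one_le_V (y : E3) : 1 ≤ V y := by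
  unfold V
  nlinarith [abs_nonneg (y 0), sq_nonneg (y 1), sq_nonneg (y 2), sq_nonneg (max (-(y 0)) 0)]

lemma one_le_sOne (y : E3) : 1 ≤ sOne y := by
  unfold sOne
  nlinarith [abs_coord_le y 0, le_abs_self (y 0)]

lemma one_le_W (y : E3) : 1 ≤ W y := by
  have h1 := one_le_sOne y
  have h2 : (0:ℝ) ≤ ‖y‖ := norm_nonneg y
  unfold W; nlinarith

lemma V_le_3W (y : E3) : V y ≤ 3 * W y := by
  have hr2 := norm_sq y
  have hr0 : (0:ℝ) ≤ ‖y‖ := norm_nonneg y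
  have har : |y 0| ≤ ‖y‖ := abs_coord_le y 0
  unfold V W sOne
  set a := y 0; set r := ‖y‖
  rcases le_or_gt 0 a with ha | ha
  · rw [max_eq_right (by linarith), abs_of_nonneg ha]
    have h1 : a ≤ r := (le_abs_self a).trans har
    nlinarith [sq_nonneg (r - a), sq_nonneg r]
  · rw [max_eq_left (by linarith), abs_of_neg ha]
    have h1 : -a ≤ r := (neg_le_abs a).trans har
    nlinarith [sq_nonneg (r + a), sq_nonneg (r - a)]

lemma W_le_18V (y : E3) : W y ≤ 18 * V y := by
  have hr2 := norm_sq y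
  have hr0 : (0:ℝ) ≤ ‖y‖ := norm_nonneg y
  have har : |y 0| ≤ ‖y‖ := abs_coord_le y 0
  unfold V W sOne
  set a := y 0; set r := ‖y‖
  rcases le_or_gt 0 a with ha | ha
  · rw [max_eq_right (by linarith), abs_of_nonneg ha]
    have h1 : a ≤ r := (le_abs_self a).trans har
    have h2 : (r - a) * (r + a) = (y 1)^2 + (y 2)^2 := by nlinarith
    nlinarith [sq_nonneg (r - a - 1), sq_nonneg (r - a), mul_nonneg (sub_nonneg.2 h1) ha]
  · rw [max_eq_left (by linarith), abs_of_neg ha]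
    have h1 : -a ≤ r := (neg_le_abs a).trans har
    nlinarith [sq_nonneg (r - 1), sq_nonneg (r + a), sq_nonneg a]

lemma quasi (x y : E3) : V x ≤ 2 * V (x - y) + 2 * V y := by
  have h0 : (x - y) 0 = x 0 - y 0 := by simp
  have h1 : (x - y) 1 = x 1 - y 1 := by simp
  have h2 : (x - y) 2 = x 2 - y 2 := by simp
  unfold V
  rw [h0, h1, h2]
  set a := x 0; set b := y 0
  have habs : |a| ≤ |a - b| + |b| := by
    calc |a| = |(a-b) + b| := by ring_nf
    _ ≤ |a - b| + |b| := abs_add_le _ _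
  have hmax : max (-a) 0 ≤ max (-(a-b)) 0 + max (-b) 0 := by
    apply max_le
    · calc -a = -(a-b) + -b := by ring
      _ ≤ max (-(a-b)) 0 + max (-b) 0 := add_le_add (le_max_left _ _) (le_max_left _ _)
    · positivity
  have hm1 : (0:ℝ) ≤ max (-a) 0 := le_max_right _ _
  have hm2 : (0:ℝ) ≤ max (-(a-b)) 0 := le_max_right _ _
  have hm3 : (0:ℝ) ≤ max (-b) 0 := le_max_right _ _
  have hsq : (max (-a) 0)^2 ≤ 2*(max (-(a-b)) 0)^2 + 2*(max (-b) 0)^2 := by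
    nlinarith [sq_nonneg (max (-(a-b)) 0 - max (-b) 0)]
  nlinarith [sq_nonneg (x 1 - 2*(y 1)), sq_nonneg (x 2 - 2*(y 2)), abs_nonneg (a - b), abs_nonneg b,
    sq_nonneg ((x 1 - y 1) - y 1), sq_nonneg ((x 2 - y 2) - y 2)]

lemma V_le_cube (x : E3) : V x ≤ (2 + ‖x‖)^3 := by
  have hr2 := norm_sq x
  have hr0 : (0:ℝ) ≤ ‖x‖ := norm_nonneg x
  have har : |x 0| ≤ ‖x‖ := abs_coord_le x 0
  have hm : max (-(x 0)) 0 ≤ |x 0| := by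
    apply max_le (neg_le_abs _) (abs_nonneg _)
  have hm0 : (0:ℝ) ≤ max (-(x 0)) 0 := le_max_right _ _
  unfold V
  nlinarith [sq_nonneg ‖x‖, sq_nonneg (x 0)]

lemma measurable_V : Measurable V := by
  have h : ∀ i : Fin 3, Measurable fun y : E3 => y i := fun i => by fun_prop
  unfold V
  fun_prop

lemma vol_sublevel (R : ℝ) (hR : 0 ≤ R) :
    volume {y : E3 | V y ≤ R} ≤ ENNReal.ofReal (8 * R^2) := by
  classical
  set b : Fin 3 → ℝ := ![R, Real.sqrt R, Real.sqrt R] with hb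
  set B : Set (Fin 3 → ℝ) := Set.univ.pi fun i => Icc (-(b i)) (b i) with hBdef
  have hBm : MeasurableSet B := MeasurableSet.univ_pi fun i => measurableSet_Icc
  have hsub : {y : E3 | V y ≤ R} ⊆ (MeasurableEquiv.toLp 2 (Fin 3 → ℝ)).symm ⁻¹' B := by
    intro y hy
    simp only [Set.mem_setOf_eq] at hy
    have h0 : |y 0| ≤ R := by
      unfold V at hy
      nlinarith [sq_nonneg (y 1), sq_nonneg (y 2), sq_nonneg (max (-(y 0)) 0)]
    have h1 : |y 1| ≤ Real.sqrt R := by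
      apply Real.abs_le_sqrt
      unfold V at hy
      nlinarith [abs_nonneg (y 0), sq_nonneg (y 2), sq_nonneg (max (-(y 0)) 0)]
    have h2 : |y 2| ≤ Real.sqrt R := by
      apply Real.abs_le_sqrt
      unfold V at hy
      nlinarith [abs_nonneg (y 0), sq_nonneg (y 1), sq_nonneg (max (-(y 0)) 0)]
    intro i _
    have hyi : (MeasurableEquiv.toLp 2 (Fin 3 → ℝ)).symm y i = y i := rfl
    rw [hyi]
    fin_cases i <;> simp only [hb] <;>
      first
      | exact abs_le.mp h0 |> fun h => ⟨by simpa using h.1, by simpa using h.2⟩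
      | exact abs_le.mp h1 |> fun h => ⟨by simpa using h.1, by simpa using h.2⟩
      | exact abs_le.mp h2 |> fun h => ⟨by simpa using h.1, by simpa using h.2⟩
  calc volume {y : E3 | V y ≤ R}
      ≤ volume ((MeasurableEquiv.toLp 2 (Fin 3 → ℝ)).symm ⁻¹' B) := measure_mono hsub
    _ = volume B :=
        (EuclideanSpace.volume_preserving_symm_measurableEquiv_toLp (Fin 3)).measure_preimage
          hBm.nullMeasurableSet
    _ ≤ ENNReal.ofReal (8 * R^2) := by
        rw [hBdef, volume_pi_pi]
        simp only [Real.volume_Icc, hb]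
        rw [Fin.prod_univ_three]
        have e0 : (![R, Real.sqrt R, Real.sqrt R] : Fin 3 → ℝ) 0 = R := rfl
        have e1 : (![R, Real.sqrt R, Real.sqrt R] : Fin 3 → ℝ) 1 = Real.sqrt R := rfl
        have e2 : (![R, Real.sqrt R, Real.sqrt R] : Fin 3 → ℝ) 2 = Real.sqrt R := rfl
        rw [e0, e1, e2]
        have hs : Real.sqrt R - -Real.sqrt R = 2 * Real.sqrt R := by ring
        have hr : R - -R = 2 * R := by ring
        rw [hs, hr, ← ENNReal.ofReal_mul (by positivity), ← ENNReal.ofReal_mul (by positivity)]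
        apply ENNReal.ofReal_le_ofReal
        have : Real.sqrt R * Real.sqrt R = R := Real.mul_self_sqrt hR
        nlinarith [Real.sqrt_nonneg R]

lemma vol_sublevel_shift (x : E3) (R : ℝ) (hR : 0 ≤ R) :
    volume {y : E3 | V (x - y) ≤ R} ≤ ENNReal.ofReal (8 * R^2) := by
  have hmp : MeasurePreserving (fun y : E3 => x - y) volume volume :=
    Measure.measurePreserving_sub_left volume x
  have hms : MeasurableSet {y : E3 | V y ≤ R} :=
    measurableSet_le measurable_V measurable_const
  have : {y : E3 | V (x - y) ≤ R} = (fun y : E3 => x - y) ⁻¹' {y : E3 | V y ≤ R} := rfl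
  rw [this, hmp.measure_preimage hms.nullMeasurableSet]
  exact vol_sublevel R hR

lemma tsum_geom_lin : ∑' i : ℕ, ((i:ℝ≥0∞)+1) * ((4:ℝ≥0∞)^i)⁻¹ ≤ 4 := by
  have hterm : ∀ i : ℕ, ((i:ℝ≥0∞)+1) * ((4:ℝ≥0∞)^i)⁻¹ ≤ (2⁻¹ : ℝ≥0∞)^i := by
    intro i
    have h1 : ((i:ℝ≥0∞)+1) ≤ (2:ℝ≥0∞)^i := by
      have : ((i+1 : ℕ) : ℝ≥0∞) ≤ ((2^i : ℕ) : ℝ≥0∞) := by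
        exact_mod_cast Nat.cast_le.mpr (Nat.lt_two_pow_self (n := i))
      simpa [Nat.cast_pow] using this
    have h4 : ((4:ℝ≥0∞)^i)⁻¹ = (2^i)⁻¹ * (2^i)⁻¹ := by
      rw [show (4:ℝ≥0∞) = 2*2 by norm_num, mul_pow]
      rw [ENNReal.mul_inv (Or.inl (by positivity)) (Or.inl (by simp))]
    calc ((i:ℝ≥0∞)+1) * ((4:ℝ≥0∞)^i)⁻¹ ≤ (2:ℝ≥0∞)^i * ((4:ℝ≥0∞)^i)⁻¹ :=
          mul_le_mul_left h1 _
      _ = (2:ℝ≥0∞)^i * ((2^i)⁻¹ * (2^i)⁻¹) := by rw [h4]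
      _ = ((2:ℝ≥0∞)^i * (2^i)⁻¹) * (2^i)⁻¹ := by ring
      _ = (2^i : ℝ≥0∞)⁻¹ := by
          rw [ENNReal.mul_inv_cancel (by positivity) (by simp), one_mul]
      _ = (2⁻¹ : ℝ≥0∞)^i := by rw [ENNReal.inv_pow]
  calc ∑' i : ℕ, ((i:ℝ≥0∞)+1) * ((4:ℝ≥0∞)^i)⁻¹ ≤ ∑' i : ℕ, (2⁻¹ : ℝ≥0∞)^i :=
        ENNReal.tsum_le_tsum hterm
    _ = (1 - 2⁻¹)⁻¹ := ENNReal.tsum_geometric _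
    _ ≤ 4 := by norm_num [ENNReal.one_sub_inv_two]

lemma tsum_tail_le (j₀ : ℕ) :
    ∑' j : ℕ, (if j₀ ≤ j then ((j:ℝ≥0∞)+1) * ((4:ℝ≥0∞)^j)⁻¹ else 0)
      ≤ 4 * (((j₀:ℝ≥0∞)+1) * ((4:ℝ≥0∞)^j₀)⁻¹) := by
  rw [← Summable.sum_add_tsum_nat_add' (k := j₀) ENNReal.summable]
  have hfront : ∑ i ∈ Finset.range j₀,
      (if j₀ ≤ i then ((i:ℝ≥0∞)+1) * ((4:ℝ≥0∞)^i)⁻¹ else 0) = 0 := by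
    apply Finset.sum_eq_zero
    intro i hi
    rw [if_neg (Nat.not_le.mpr (Finset.mem_range.mp hi))]
  rw [hfront, zero_add]
  have hterm : ∀ i : ℕ,
      (if j₀ ≤ i + j₀ then (((i+j₀ : ℕ):ℝ≥0∞)+1) * ((4:ℝ≥0∞)^(i+j₀))⁻¹ else 0)
        ≤ (((j₀:ℝ≥0∞)+1) * ((4:ℝ≥0∞)^j₀)⁻¹) * (((i:ℝ≥0∞)+1) * ((4:ℝ≥0∞)^i)⁻¹) := by
    intro i
    rw [if_pos (Nat.le_add_left _ _)]
    have hc : (((i+j₀ : ℕ):ℝ≥0∞)+1) ≤ ((i:ℝ≥0∞)+1) * ((j₀:ℝ≥0∞)+1) := by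
      have hn : (i+j₀+1 : ℕ) ≤ (i+1)*(j₀+1) := by nlinarith
      calc (((i+j₀ : ℕ):ℝ≥0∞)+1) = ((i+j₀+1 : ℕ) : ℝ≥0∞) := by push_cast; ring
        _ ≤ (((i+1)*(j₀+1) : ℕ) : ℝ≥0∞) := by exact_mod_cast hn
        _ = ((i:ℝ≥0∞)+1) * ((j₀:ℝ≥0∞)+1) := by push_cast; ring
    have hp : ((4:ℝ≥0∞)^(i+j₀))⁻¹ = ((4:ℝ≥0∞)^i)⁻¹ * ((4:ℝ≥0∞)^j₀)⁻¹ := by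
      rw [pow_add, ENNReal.mul_inv (Or.inl (by positivity)) (Or.inl (by simp))]
    calc (((i+j₀ : ℕ):ℝ≥0∞)+1) * ((4:ℝ≥0∞)^(i+j₀))⁻¹
        ≤ (((i:ℝ≥0∞)+1) * ((j₀:ℝ≥0∞)+1)) * (((4:ℝ≥0∞)^i)⁻¹ * ((4:ℝ≥0∞)^j₀)⁻¹) := by
          rw [hp]; exact mul_le_mul_left hc _
      _ = (((j₀:ℝ≥0∞)+1) * ((4:ℝ≥0∞)^j₀)⁻¹) * (((i:ℝ≥0∞)+1) * ((4:ℝ≥0∞)^i)⁻¹) := by ring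
  calc ∑' i : ℕ, (if j₀ ≤ i + j₀ then (((i+j₀:ℕ):ℝ≥0∞)+1) * ((4:ℝ≥0∞)^(i+j₀))⁻¹ else 0)
      ≤ ∑' i : ℕ, (((j₀:ℝ≥0∞)+1) * ((4:ℝ≥0∞)^j₀)⁻¹) * (((i:ℝ≥0∞)+1) * ((4:ℝ≥0∞)^i)⁻¹) :=
        ENNReal.tsum_le_tsum hterm
    _ = (((j₀:ℝ≥0∞)+1) * ((4:ℝ≥0∞)^j₀)⁻¹) * ∑' i : ℕ, (((i:ℝ≥0∞)+1) * ((4:ℝ≥0∞)^i)⁻¹) :=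
        ENNReal.tsum_mul_left
    _ ≤ (((j₀:ℝ≥0∞)+1) * ((4:ℝ≥0∞)^j₀)⁻¹) * 4 := mul_le_mul_right tsum_geom_lin _
    _ = 4 * (((j₀:ℝ≥0∞)+1) * ((4:ℝ≥0∞)^j₀)⁻¹) := by ring

lemma rpow_neg_two (t : ℝ) (ht : 0 ≤ t) : t ^ (-(2:ℝ)) = (t^2)⁻¹ := by
  rw [Real.rpow_neg ht]
  congr 1
  rw [show ((2:ℝ)) = ((2:ℕ):ℝ) by norm_num, Real.rpow_natCast]

lemma pow_slot_unique {v : ℝ} {m n : ℕ} (h1 : (2:ℝ)^m ≤ v) (h2 : v < 2^(m+1))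
    (h3 : (2:ℝ)^n ≤ v) (h4 : v < 2^(n+1)) : m = n := by
  by_contra hne
  rcases Nat.lt_or_ge m n with h | h
  · have : (2:ℝ)^(m+1) ≤ 2^n := pow_le_pow_right₀ one_le_two h
    linarith
  · have hlt : n < m := lt_of_le_of_ne h (Ne.symm hne)
    have : (2:ℝ)^(n+1) ≤ 2^m := pow_le_pow_right₀ one_le_two hlt
    linarith

end ConvAux


set_option maxHeartbeats 3000000 in
open ConvAux Set ENNReal in
theorem convolution_inequality :
    ∃ C : ℝ, 0 < C ∧ ∀ x : EuclideanSpace ℝ (Fin 3),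
      (∫ y : EuclideanSpace ℝ (Fin 3),
          ((1 + ‖x - y‖) * sOne (x - y)) ^ (-(2:ℝ)) * ((1 + ‖y‖) * sOne y) ^ (-(2:ℝ)))
        ≤ C * ((1 + ‖x‖) * sOne x) ^ (-(2:ℝ)) * Real.log (2 + ‖x‖) := by
  classical
  refine ⟨20736 * 6 * 64 * 324, by norm_num, fun x => ?_⟩
  set L : ℝ := Real.log (2 + ‖x‖) with hLdef
  have hlog2 : (0.6931471803:ℝ) < Real.log 2 := Real.log_two_gt_d9
  have hL2 : Real.log 2 ≤ L := by
    rw [hLdef]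
    exact Real.log_le_log (by norm_num) (by linarith [norm_nonneg x])
  have hLpos : (0:ℝ) < L := by linarith
  have hWx1 : 1 ≤ W x := one_le_W x
  have hVx1 : 1 ≤ V x := one_le_V x
  -- integrand in inverse-square form
  set f : E3 → ℝ := fun y => ((W (x - y))^2)⁻¹ * ((W y)^2)⁻¹ with hfdef
  have hf_eq : ∀ y : E3,
      ((1 + ‖x - y‖) * sOne (x - y)) ^ (-(2:ℝ)) * ((1 + ‖y‖) * sOne y) ^ (-(2:ℝ)) = f y := by
    intro y
    have h1 : (0:ℝ) ≤ W (x - y) := le_trans zero_le_one (one_le_W _)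
    have h2 : (0:ℝ) ≤ W y := le_trans zero_le_one (one_le_W _)
    show (W (x - y)) ^ (-(2:ℝ)) * (W y) ^ (-(2:ℝ)) = f y
    rw [rpow_neg_two _ h1, rpow_neg_two _ h2]
  have hf_nonneg : ∀ y, 0 ≤ f y := fun y => by
    rw [hfdef]; positivity
  have hWm : Measurable W := by
    have hcoord : Measurable fun y : E3 => y 0 := by fun_prop
    unfold W sOne
    fun_prop
  have hfm : Measurable f := by
    rw [hfdef]
    exact (((hWm.comp (measurable_const.sub measurable_id)).pow_const 2).inv).mul
      ((hWm.pow_const 2).inv)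
  -- reduce to a lintegral
  rw [show (∫ y : E3, ((1 + ‖x - y‖) * sOne (x - y)) ^ (-(2:ℝ)) *
      ((1 + ‖y‖) * sOne y) ^ (-(2:ℝ))) = ∫ y : E3, f y from by
    congr 1; funext y; exact hf_eq y]
  rw [integral_eq_lintegral_of_nonneg_ae (ae_of_all _ hf_nonneg) hfm.aestronglyMeasurable]
  -- dyadic cells
  set S : ℕ × ℕ → Set E3 := fun p =>
    ({y : E3 | (2:ℝ)^p.1 ≤ V y} ∩ {y : E3 | V y < 2^(p.1+1)}) ∩
    ({y : E3 | (2:ℝ)^p.2 ≤ V (x - y)} ∩ {y : E3 | V (x - y) < 2^(p.2+1)}) with hSdef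
  have hVsm : Measurable fun y : E3 => V (x - y) :=
    measurable_V.comp (measurable_const.sub measurable_id)
  have hSm : ∀ p, MeasurableSet (S p) := by
    intro p
    exact ((measurableSet_le measurable_const measurable_V).inter
        (measurableSet_lt measurable_V measurable_const)).inter
      ((measurableSet_le measurable_const hVsm).inter
        (measurableSet_lt hVsm measurable_const))
  have hdisj : Pairwise (Function.onFun Disjoint S) := by
    intro p q hpq
    rw [Function.onFun, Set.disjoint_left]
    intro y hyp hyq
    obtain ⟨⟨hp1, hp2⟩, ⟨hp3, hp4⟩⟩ := hyp
    obtain ⟨⟨hq1, hq2⟩, ⟨hq3, hq4⟩⟩ := hyq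
    exact hpq (Prod.ext (pow_slot_unique hp1 hp2 hq1 hq2) (pow_slot_unique hp3 hp4 hq3 hq4))
  have hcover : (⋃ p, S p) = Set.univ := by
    ext y
    simp only [Set.mem_iUnion, Set.mem_univ, iff_true]
    obtain ⟨j, hj1, hj2⟩ := exists_nat_pow_near (one_le_V y) one_lt_two
    obtain ⟨k, hk1, hk2⟩ := exists_nat_pow_near (one_le_V (x - y)) one_lt_two
    exact ⟨(j, k), ⟨⟨hj1, hj2⟩, ⟨hk1, hk2⟩⟩⟩
  have hdecomp : (∫⁻ y, ENNReal.ofReal (f y)) = ∑' p : ℕ × ℕ, ∫⁻ y in S p, ENNReal.ofReal (f y) := by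
    rw [← setLIntegral_univ, ← hcover, lintegral_iUnion hSm hdisj]
  -- per-cell bound
  set D : ℕ × ℕ → ℝ≥0∞ := fun p =>
    if V x ≤ 8 * 2^(max p.1 p.2) then ENNReal.ofReal (2592 * ((4:ℝ)^(max p.1 p.2))⁻¹) else 0
    with hDdef
  have hcell : ∀ p : ℕ × ℕ, (∫⁻ y in S p, ENNReal.ofReal (f y)) ≤ D p := by
    rintro ⟨j, k⟩
    by_cases hS0 : volume (S (j, k)) = 0
    · have : (∫⁻ y in S (j,k), ENNReal.ofReal (f y)) = 0 := by
        rw [Measure.restrict_eq_zero.mpr hS0, lintegral_zero_measure]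
      rw [this]; exact zero_le
    · have hne : (S (j,k)).Nonempty := by
        rw [Set.nonempty_iff_ne_empty]
        intro h
        rw [h] at hS0
        exact hS0 measure_empty
      obtain ⟨y₀, ⟨⟨_, ha2⟩, ⟨_, ha4⟩⟩⟩ := hne
      simp only [Set.mem_setOf_eq] at ha2 ha4
      have hcon : V x ≤ 8 * 2^(max j k) := by
        have h1 : (2:ℝ)^(j+1) ≤ 2^(max j k + 1) :=
          pow_le_pow_right₀ one_le_two (by omega)
        have h2 : (2:ℝ)^(k+1) ≤ 2^(max j k + 1) :=
          pow_le_pow_right₀ one_le_two (by omega)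
        have hq := quasi x y₀
        have e : (2:ℝ)^(max j k + 1) = 2 * 2^(max j k) := by ring
        nlinarith
      rw [hDdef]
      simp only [if_pos hcon]
      have hj4 : ((2:ℝ)^j)^2 = 4^j := by
        rw [← pow_mul, mul_comm, pow_mul]; norm_num
      have hk4 : ((2:ℝ)^k)^2 = 4^k := by
        rw [← pow_mul, mul_comm, pow_mul]; norm_num
      -- pointwise bound on the cell
      have hfb : ∀ y ∈ S (j,k), ENNReal.ofReal (f y) ≤
          ENNReal.ofReal (81 * ((4:ℝ)^j)⁻¹ * ((4:ℝ)^k)⁻¹) := by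
        rintro y ⟨⟨hb1, _⟩, ⟨hb3, _⟩⟩
        simp only [Set.mem_setOf_eq] at hb1 hb3
        apply ENNReal.ofReal_le_ofReal
        have hWy : (2:ℝ)^j / 3 ≤ W y := by
          have := V_le_3W y; linarith
        have hWxy : (2:ℝ)^k / 3 ≤ W (x - y) := by
          have := V_le_3W (x - y); linarith
        have h2j : (0:ℝ) < (2:ℝ)^j := by positivity
        have h2k : (0:ℝ) < (2:ℝ)^k := by positivity
        have h1 : ((W (x-y))^2)⁻¹ ≤ (((2:ℝ)^k/3)^2)⁻¹ := by
          apply inv_anti₀ (by positivity)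
          nlinarith [one_le_W (x - y)]
        have h2 : ((W y)^2)⁻¹ ≤ (((2:ℝ)^j/3)^2)⁻¹ := by
          apply inv_anti₀ (by positivity)
          nlinarith [one_le_W y]
        have e1 : (((2:ℝ)^k/3)^2)⁻¹ = 9 * ((4:ℝ)^k)⁻¹ := by
          rw [div_pow, hk4]
          rw [inv_div]
          ring
        have e2 : (((2:ℝ)^j/3)^2)⁻¹ = 9 * ((4:ℝ)^j)⁻¹ := by
          rw [div_pow, hj4]
          rw [inv_div]
          ring
        calc f y = ((W (x-y))^2)⁻¹ * ((W y)^2)⁻¹ := rfl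
          _ ≤ (((2:ℝ)^k/3)^2)⁻¹ * (((2:ℝ)^j/3)^2)⁻¹ := by
              apply mul_le_mul h1 h2 (by positivity) (by positivity)
          _ = 81 * ((4:ℝ)^j)⁻¹ * ((4:ℝ)^k)⁻¹ := by
              rw [e1, e2]; ring
      have hint : (∫⁻ y in S (j,k), ENNReal.ofReal (f y)) ≤
          ENNReal.ofReal (81 * ((4:ℝ)^j)⁻¹ * ((4:ℝ)^k)⁻¹) * volume (S (j,k)) := by
        calc (∫⁻ y in S (j,k), ENNReal.ofReal (f y))
            ≤ (∫⁻ _ in S (j,k), ENNReal.ofReal (81 * ((4:ℝ)^j)⁻¹ * ((4:ℝ)^k)⁻¹)) :=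
              setLIntegral_mono measurable_const hfb
          _ = ENNReal.ofReal (81 * ((4:ℝ)^j)⁻¹ * ((4:ℝ)^k)⁻¹) * volume (S (j,k)) :=
              setLIntegral_const _ _
      refine hint.trans ?_
      rcases le_total j k with hjk | hjk
      · -- max = k, use the small-j sublevel bound on V y
        rw [max_eq_right hjk]
        have hsub : S (j,k) ⊆ {y : E3 | V y ≤ 2^(j+1)} := by
          rintro y ⟨⟨_, hy2⟩, _⟩
          simp only [Set.mem_setOf_eq] at hy2 ⊢
          linarith
        have hvol : volume (S (j,k)) ≤ ENNReal.ofReal (8 * ((2:ℝ)^(j+1))^2) :=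
          (measure_mono hsub).trans (vol_sublevel _ (by positivity))
        calc ENNReal.ofReal (81 * ((4:ℝ)^j)⁻¹ * ((4:ℝ)^k)⁻¹) * volume (S (j,k))
            ≤ ENNReal.ofReal (81 * ((4:ℝ)^j)⁻¹ * ((4:ℝ)^k)⁻¹) *
              ENNReal.ofReal (8 * ((2:ℝ)^(j+1))^2) := mul_le_mul_right hvol _
          _ = ENNReal.ofReal (81 * ((4:ℝ)^j)⁻¹ * ((4:ℝ)^k)⁻¹ * (8 * ((2:ℝ)^(j+1))^2)) :=
              (ENNReal.ofReal_mul (by positivity)).symm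
          _ ≤ ENNReal.ofReal (2592 * ((4:ℝ)^k)⁻¹) := by
              apply ENNReal.ofReal_le_ofReal
              have e3 : ((2:ℝ)^(j+1))^2 = 4 * 4^j := by
                rw [show ((2:ℝ)^(j+1)) = 2 * 2^j from by rw [pow_succ]; ring, ← hj4]
                ring
              have h4j : (0:ℝ) < (4:ℝ)^j := by positivity
              have hinv : ((4:ℝ)^j)⁻¹ * (4:ℝ)^j = 1 := inv_mul_cancel₀ (ne_of_gt h4j)
              apply le_of_eq
              calc 81 * ((4:ℝ)^j)⁻¹ * ((4:ℝ)^k)⁻¹ * (8 * ((2:ℝ)^(j+1))^2)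
                  = 2592 * ((4:ℝ)^k)⁻¹ * (((4:ℝ)^j)⁻¹ * (4:ℝ)^j) := by rw [e3]; ring
                _ = 2592 * ((4:ℝ)^k)⁻¹ := by rw [hinv, mul_one]
      · -- max = j, use the small-k sublevel bound on V (x - y)
        rw [max_eq_left hjk]
        have hsub : S (j,k) ⊆ {y : E3 | V (x - y) ≤ 2^(k+1)} := by
          rintro y ⟨_, ⟨_, hy4⟩⟩
          simp only [Set.mem_setOf_eq] at hy4 ⊢
          linarith
        have hvol : volume (S (j,k)) ≤ ENNReal.ofReal (8 * ((2:ℝ)^(k+1))^2) :=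
          (measure_mono hsub).trans (vol_sublevel_shift x _ (by positivity))
        calc ENNReal.ofReal (81 * ((4:ℝ)^j)⁻¹ * ((4:ℝ)^k)⁻¹) * volume (S (j,k))
            ≤ ENNReal.ofReal (81 * ((4:ℝ)^j)⁻¹ * ((4:ℝ)^k)⁻¹) *
              ENNReal.ofReal (8 * ((2:ℝ)^(k+1))^2) := mul_le_mul_right hvol _
          _ = ENNReal.ofReal (81 * ((4:ℝ)^j)⁻¹ * ((4:ℝ)^k)⁻¹ * (8 * ((2:ℝ)^(k+1))^2)) :=
              (ENNReal.ofReal_mul (by positivity)).symm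
          _ ≤ ENNReal.ofReal (2592 * ((4:ℝ)^j)⁻¹) := by
              apply ENNReal.ofReal_le_ofReal
              have e3 : ((2:ℝ)^(k+1))^2 = 4 * 4^k := by
                rw [show ((2:ℝ)^(k+1)) = 2 * 2^k from by rw [pow_succ]; ring, ← hk4]
                ring
              have h4k : (0:ℝ) < (4:ℝ)^k := by positivity
              have hinv : ((4:ℝ)^k)⁻¹ * (4:ℝ)^k = 1 := inv_mul_cancel₀ (ne_of_gt h4k)
              apply le_of_eq
              calc 81 * ((4:ℝ)^j)⁻¹ * ((4:ℝ)^k)⁻¹ * (8 * ((2:ℝ)^(k+1))^2)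
                  = 2592 * ((4:ℝ)^j)⁻¹ * (((4:ℝ)^k)⁻¹ * (4:ℝ)^k) := by rw [e3]; ring
                _ = 2592 * ((4:ℝ)^j)⁻¹ := by rw [hinv, mul_one]
  -- sum the cell bounds
  set c : ℕ → ℝ≥0∞ := fun m => ENNReal.ofReal (2592 * ((4:ℝ)^m)⁻¹) with hcdef
  have hcval : ∀ m : ℕ, c m = 2592 * ((4:ℝ≥0∞)^m)⁻¹ := by
    intro m
    show ENNReal.ofReal (2592 * ((4:ℝ)^m)⁻¹) = 2592 * ((4:ℝ≥0∞)^m)⁻¹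
    rw [ENNReal.ofReal_mul (by norm_num), ENNReal.ofReal_inv_of_pos (by positivity),
      ENNReal.ofReal_pow (by norm_num)]
    norm_num
  have hex : ∃ m : ℕ, V x ≤ 8 * 2^m := by
    obtain ⟨n, hn⟩ := pow_unbounded_of_one_lt (V x) (one_lt_two (α := ℝ))
    exact ⟨n, by nlinarith [pow_pos (zero_lt_two (α := ℝ)) n]⟩
  set j₀ := Nat.find hex with hj₀def
  have hPspec : V x ≤ 8 * 2^j₀ := Nat.find_spec hex
  have hPiff : ∀ m : ℕ, (V x ≤ 8 * 2^m) ↔ j₀ ≤ m := by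
    intro m
    constructor
    · exact fun h => Nat.find_le h
    · intro h
      have hmono : (2:ℝ)^j₀ ≤ 2^m := pow_le_pow_right₀ one_le_two h
      linarith
  -- counting helper
  have hcount : ∀ (N : ℕ) (a : ℝ≥0∞), (∑' i : ℕ, if i < N then a else 0) = (N:ℝ≥0∞) * a := by
    intro N a
    rw [tsum_eq_sum (s := Finset.range N)
      (fun i hi => if_neg (fun h => hi (Finset.mem_range.mpr h)))]
    rw [Finset.sum_congr rfl (fun i hi => if_pos (Finset.mem_range.mp hi))]
    rw [Finset.sum_const, Finset.card_range, nsmul_eq_mul]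
  -- split the cell bound into the two half-sums
  have hD1 : ∀ p : ℕ × ℕ, D p ≤
      (if j₀ ≤ p.1 ∧ p.2 < p.1 + 1 then c p.1 else 0) +
      (if j₀ ≤ p.2 ∧ p.1 < p.2 then c p.2 else 0) := by
    rintro ⟨j, k⟩
    simp only [hDdef]
    rcases le_or_gt k j with h | h
    · rw [max_eq_left h]
      by_cases hP : V x ≤ 8 * 2^j
      · rw [if_pos hP, if_pos ⟨(hPiff j).mp hP, by omega⟩]
        exact le_add_right (le_of_eq rfl)
      · rw [if_neg hP]; exact zero_le
    · rw [max_eq_right h.le]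
      by_cases hP : V x ≤ 8 * 2^k
      · rw [if_pos hP, if_neg (fun hand => absurd hand.2 (by omega)),
          if_pos ⟨(hPiff k).mp hP, h⟩, zero_add]
      · rw [if_neg hP]; exact zero_le
  -- the master single sum
  set T : ℝ≥0∞ := ∑' m : ℕ, (if j₀ ≤ m then (((m:ℕ)+1 : ℕ):ℝ≥0∞) * c m else 0) with hTdef
  have hsum1 : (∑' p : ℕ × ℕ, (if j₀ ≤ p.1 ∧ p.2 < p.1 + 1 then c p.1 else 0)) = T := by
    rw [ENNReal.tsum_prod', hTdef]
    apply tsum_congr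
    intro j
    by_cases hPj : j₀ ≤ j
    · rw [if_pos hPj]
      calc (∑' k : ℕ, if j₀ ≤ j ∧ k < j + 1 then c j else 0)
          = ∑' k : ℕ, (if k < j + 1 then c j else 0) := by
            apply tsum_congr
            intro k
            by_cases hk : k < j + 1
            · rw [if_pos ⟨hPj, hk⟩, if_pos hk]
            · rw [if_neg (fun hand => hk hand.2), if_neg hk]
        _ = (((j+1 : ℕ)):ℝ≥0∞) * c j := hcount (j+1) (c j)
    · rw [if_neg hPj]
      calc (∑' k : ℕ, if j₀ ≤ j ∧ k < j + 1 then c j else 0)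
          = ∑' k : ℕ, (0:ℝ≥0∞) := by
            apply tsum_congr
            intro k
            rw [if_neg (fun hand => hPj hand.1)]
        _ = 0 := tsum_zero
  have hsum2 : (∑' p : ℕ × ℕ, (if j₀ ≤ p.2 ∧ p.1 < p.2 then c p.2 else 0)) ≤ T := by
    rw [ENNReal.tsum_prod', ENNReal.tsum_comm, hTdef]
    apply ENNReal.tsum_le_tsum
    intro k
    by_cases hPk : j₀ ≤ k
    · calc (∑' j : ℕ, if j₀ ≤ k ∧ j < k then c k else 0)
          = ∑' j : ℕ, (if j < k then c k else 0) := by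
            apply tsum_congr
            intro j
            by_cases hj : j < k
            · rw [if_pos ⟨hPk, hj⟩, if_pos hj]
            · rw [if_neg (fun hand => hj hand.2), if_neg hj]
        _ = ((k:ℕ):ℝ≥0∞) * c k := hcount k (c k)
        _ ≤ (((k+1 : ℕ)):ℝ≥0∞) * c k := by
            apply mul_le_mul_left
            exact_mod_cast Nat.cast_le.mpr (Nat.le_succ k)
        _ = (if j₀ ≤ k then (((k:ℕ)+1 : ℕ):ℝ≥0∞) * c k else 0) := by rw [if_pos hPk]
    · calc (∑' j : ℕ, if j₀ ≤ k ∧ j < k then c k else 0)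
          = ∑' j : ℕ, (0:ℝ≥0∞) := by
            apply tsum_congr
            intro j
            rw [if_neg (fun hand => hPk hand.1)]
        _ = 0 := tsum_zero
        _ ≤ _ := zero_le
  -- evaluate T
  have hT : T ≤ 10368 * (((j₀:ℝ≥0∞)+1) * ((4:ℝ≥0∞)^j₀)⁻¹) := by
    have hTeq : T = 2592 * ∑' m : ℕ,
        (if j₀ ≤ m then ((m:ℝ≥0∞)+1) * ((4:ℝ≥0∞)^m)⁻¹ else 0) := by
      rw [hTdef, ← ENNReal.tsum_mul_left]
      apply tsum_congr
      intro m
      by_cases hm : j₀ ≤ m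
      · rw [if_pos hm, if_pos hm, hcval m]
        push_cast
        ring
      · rw [if_neg hm, if_neg hm, mul_zero]
    rw [hTeq]
    calc 2592 * ∑' m : ℕ, (if j₀ ≤ m then ((m:ℝ≥0∞)+1) * ((4:ℝ≥0∞)^m)⁻¹ else 0)
        ≤ 2592 * (4 * (((j₀:ℝ≥0∞)+1) * ((4:ℝ≥0∞)^j₀)⁻¹)) :=
          mul_le_mul_right (tsum_tail_le j₀) _
      _ = 10368 * (((j₀:ℝ≥0∞)+1) * ((4:ℝ≥0∞)^j₀)⁻¹) := by ring
  -- numeric bounds at the threshold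
  have hq4 : ((2:ℝ)^j₀)^2 = 4^j₀ := by
    rw [← pow_mul, mul_comm, pow_mul]; norm_num
  have hj1r : ((j₀:ℝ)+1) ≤ 6 * L := by
    rcases Nat.eq_zero_or_pos j₀ with h0 | hpos
    · rw [h0]
      norm_num
      nlinarith
    · obtain ⟨n, hn⟩ : ∃ n, j₀ = n + 1 := ⟨j₀ - 1, by omega⟩
      have hnot : ¬ (V x ≤ 8 * 2^n) := Nat.find_min hex (by omega)
      push_neg at hnot
      have hcube := V_le_cube x
      have hlt : (2:ℝ)^(n+3) < (2+‖x‖)^3 := by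
        have he : (2:ℝ)^(n+3) = 8 * 2^n := by rw [pow_add]; norm_num; ring
        linarith
      have hlog := Real.log_lt_log (by positivity) hlt
      rw [Real.log_pow, Real.log_pow] at hlog
      rw [hn]
      push_cast
      push_cast at hlog
      nlinarith [hlog2, hLpos, hlog, hL2]
  have hj1 : ((j₀:ℝ≥0∞)+1) ≤ ENNReal.ofReal (6*L) := by
    calc ((j₀:ℝ≥0∞)+1) = ENNReal.ofReal ((j₀:ℝ)+1) := by
          rw [ENNReal.ofReal_add (by positivity) zero_le_one, ENNReal.ofReal_natCast,
            ENNReal.ofReal_one]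
      _ ≤ ENNReal.ofReal (6*L) := ENNReal.ofReal_le_ofReal hj1r
  have hj2 : ((4:ℝ≥0∞)^j₀)⁻¹ ≤ ENNReal.ofReal (64 * ((V x)^2)⁻¹) := by
    have he : ((4:ℝ≥0∞)^j₀)⁻¹ = ENNReal.ofReal (((4:ℝ)^j₀)⁻¹) := by
      rw [ENNReal.ofReal_inv_of_pos (by positivity), ENNReal.ofReal_pow (by norm_num)]
      norm_num
    rw [he]
    apply ENNReal.ofReal_le_ofReal
    have h4 : (V x)^2 ≤ 64 * 4^j₀ := by nlinarith [pow_pos (zero_lt_two (α := ℝ)) j₀]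
    rw [show (64:ℝ)*((V x)^2)⁻¹ = 64/(V x)^2 by ring, le_div_iff₀ (by positivity)]
    have h4j : (0:ℝ) < (4:ℝ)^j₀ := by positivity
    rw [inv_mul_le_iff₀ h4j]
    linarith
  -- final real comparison
  have hWV : W x ≤ 18 * V x := W_le_18V x
  have hinv : ((V x)^2)⁻¹ ≤ 324 * ((W x)^2)⁻¹ := by
    rw [show (324:ℝ) * ((W x)^2)⁻¹ = 324/(W x)^2 by ring, le_div_iff₀ (by positivity)]
    rw [inv_mul_le_iff₀ (by positivity)]
    nlinarith
  have hfinal : (∫⁻ y, ENNReal.ofReal (f y)) ≤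
      ENNReal.ofReal ((20736 * 6 * 64 * 324) * ((W x)^2)⁻¹ * L) := by
    calc (∫⁻ y, ENNReal.ofReal (f y))
        = ∑' p : ℕ × ℕ, ∫⁻ y in S p, ENNReal.ofReal (f y) := hdecomp
      _ ≤ ∑' p : ℕ × ℕ, D p := ENNReal.tsum_le_tsum hcell
      _ ≤ ∑' p : ℕ × ℕ, ((if j₀ ≤ p.1 ∧ p.2 < p.1 + 1 then c p.1 else 0) +
            (if j₀ ≤ p.2 ∧ p.1 < p.2 then c p.2 else 0)) := ENNReal.tsum_le_tsum hD1
      _ = (∑' p : ℕ × ℕ, (if j₀ ≤ p.1 ∧ p.2 < p.1 + 1 then c p.1 else 0)) +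
            (∑' p : ℕ × ℕ, (if j₀ ≤ p.2 ∧ p.1 < p.2 then c p.2 else 0)) := ENNReal.tsum_add
      _ ≤ T + T := by
          rw [hsum1]
          exact add_le_add_right hsum2 T
      _ ≤ (10368 * (((j₀:ℝ≥0∞)+1) * ((4:ℝ≥0∞)^j₀)⁻¹)) +
            (10368 * (((j₀:ℝ≥0∞)+1) * ((4:ℝ≥0∞)^j₀)⁻¹)) := add_le_add hT hT
      _ = 20736 * (((j₀:ℝ≥0∞)+1) * ((4:ℝ≥0∞)^j₀)⁻¹) := by ring
      _ ≤ 20736 * (ENNReal.ofReal (6*L) * ENNReal.ofReal (64 * ((V x)^2)⁻¹)) := by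
          exact mul_le_mul_right (mul_le_mul' hj1 hj2) _
      _ = ENNReal.ofReal (20736 * ((6*L) * (64 * ((V x)^2)⁻¹))) := by
          rw [← ENNReal.ofReal_mul (by positivity : (0:ℝ) ≤ 6*L)]
          rw [show ((20736:ℝ≥0∞)) = ENNReal.ofReal 20736 by
            rw [ENNReal.ofReal_ofNat]]
          rw [← ENNReal.ofReal_mul (by norm_num : (0:ℝ) ≤ 20736)]
      _ ≤ ENNReal.ofReal ((20736 * 6 * 64 * 324) * ((W x)^2)⁻¹ * L) := by
          apply ENNReal.ofReal_le_ofReal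
          have h := mul_le_mul_of_nonneg_left hinv
            (show (0:ℝ) ≤ 20736*6*64*L by positivity)
          linear_combination h
  -- conclude
  have hWnn : (0:ℝ) ≤ (1 + ‖x‖) * sOne x := le_trans zero_le_one hWx1
  rw [rpow_neg_two _ hWnn]
  have hgoal : (20736 * 6 * 64 * 324 : ℝ) * (((1 + ‖x‖) * sOne x)^2)⁻¹ * L =
      (20736 * 6 * 64 * 324 : ℝ) * ((W x)^2)⁻¹ * L := rfl
  rw [hgoal]
  calc (∫⁻ y, ENNReal.ofReal (f y)).toReal
      ≤ (ENNReal.ofReal ((20736 * 6 * 64 * 324) * ((W x)^2)⁻¹ * L)).toReal := by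
        apply ENNReal.toReal_mono ENNReal.ofReal_ne_top hfinal
    _ = (20736 * 6 * 64 * 324) * ((W x)^2)⁻¹ * L := ENNReal.toReal_ofReal (by positivity)
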